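/- arXiv:1411.0186 — 4 statements merged into one kernel-verified Lean document; each statement's English description precedes it below -/
import Mathlib

section
/- Let (Ω, μ) be a probability space with a filtration (F_n)_{n∈ℕ}, let (M_n) be a martingale with respect to (F_n), let k ∈ ℕ, and let (N_n) be a sequence of integrable functions such that each N_n is strongly F_n-measurable and |N_n(ω) − M_n(ω)| ≤ 2^{-(n+k+2)} for every ω and n. Define L_0 = N_0 and L_{n+1} = N_{n+1} − μ[N_{n+1} | F_n] + L_n. Then (L_n) is a martingale with respect to (F_n), and for every n, for μ-almost every ω, |L_n(ω) − M_n(ω)| ≤ (2 − 2^{-n})·2^{-(k+1)}, and in particular |L_n(ω) − M_n(ω)| < 2^{-k}. -/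
open MeasureTheory Filter

theorem stmt_0 {Ω : Type*} {m0 : MeasurableSpace Ω} {μ : Measure Ω} [IsProbabilityMeasure μ]
    (ℱ : Filtration ℕ m0) (M : ℕ → Ω → ℝ) (hM : Martingale M ℱ μ)
    (hMint : ∀ n, Integrable (M n) μ)
    (k : ℕ) (N : ℕ → Ω → ℝ)
    (hNint : ∀ n, Integrable (N n) μ)
    (hNmeas : ∀ n, StronglyMeasurable[ℱ n] (N n))
    (hNclose : ∀ n ω, |N n ω - M n ω| ≤ (2 : ℝ) ^ (-(n + k + 2 : ℤ)))
    (L : ℕ → Ω → ℝ)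
    (hL0 : L 0 = N 0)
    (hLsucc : ∀ n, L (n + 1) = N (n + 1) - μ[N (n + 1)|ℱ n] + L n) :
    Martingale L ℱ μ ∧ (∀ n, Integrable (L n) μ) ∧
      ∀ n, ∀ᵐ ω ∂μ,
        |L n ω - M n ω| ≤ (2 - (2 : ℝ) ^ (-(n : ℤ))) * (2 : ℝ) ^ (-(k + 1 : ℤ)) ∧
        |L n ω - M n ω| < (2 : ℝ) ^ (-(k : ℤ)) := by
  have hLint : ∀ n, Integrable (L n) μ := by
    intro n
    induction n with
    | zero => rw [hL0]; exact hNint 0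
    | succ n ih =>
      rw [hLsucc]
      exact ((hNint (n + 1)).sub integrable_condExp).add ih
  have hLadp : StronglyAdapted ℱ L := by
    intro n
    induction n with
    | zero => rw [hL0]; exact hNmeas 0
    | succ n ih =>
      rw [hLsucc]
      exact ((hNmeas (n + 1)).sub
        (stronglyMeasurable_condExp.mono (ℱ.mono n.le_succ))).add
        (ih.mono (ℱ.mono n.le_succ))
  have hcond : ∀ n, μ[L (n + 1)|ℱ n] =ᵐ[μ] L n := by
    intro n
    rw [hLsucc]
    have h1 : μ[(N (n + 1) - μ[N (n + 1)|ℱ n]) + L n|ℱ n]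
        =ᵐ[μ] μ[N (n + 1) - μ[N (n + 1)|ℱ n]|ℱ n] + μ[L n|ℱ n] :=
      condExp_add ((hNint (n + 1)).sub integrable_condExp) (hLint n) _
    have h2 : μ[N (n + 1) - μ[N (n + 1)|ℱ n]|ℱ n]
        =ᵐ[μ] μ[N (n + 1)|ℱ n] - μ[μ[N (n + 1)|ℱ n]|ℱ n] :=
      condExp_sub (hNint (n + 1)) integrable_condExp _
    have h3 : μ[μ[N (n + 1)|ℱ n]|ℱ n] = μ[N (n + 1)|ℱ n] :=
      condExp_of_stronglyMeasurable (ℱ.le n) stronglyMeasurable_condExp integrable_condExp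
    have h4 : μ[L n|ℱ n] = L n :=
      condExp_of_stronglyMeasurable (ℱ.le n) (hLadp n) (hLint n)
    refine h1.trans ?_
    rw [h4]
    filter_upwards [h2] with ω hω
    simp only [Pi.add_apply]
    rw [hω]
    simp [h3]
  have hmart : Martingale L ℱ μ := martingale_nat hLadp hLint fun n => (hcond n).symm
  refine ⟨hmart, hLint, ?_⟩
  have hbound : ∀ n, ∀ᵐ ω ∂μ,
      |L n ω - M n ω| ≤ (2 - (2 : ℝ) ^ (-(n : ℤ))) * (2 : ℝ) ^ (-(k + 1 : ℤ)) := by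
    intro n
    induction n with
    | zero =>
      refine ae_of_all _ fun ω => ?_
      rw [hL0]
      refine (hNclose 0 ω).trans ?_
      have h1 : (2 : ℝ) ^ (-((0 : ℕ) + (k : ℤ) + 2)) ≤ (2 : ℝ) ^ (-((k : ℤ) + 1)) :=
        zpow_le_zpow_right₀ one_le_two (by push_cast; omega)
      refine h1.trans_eq ?_
      norm_num
    | succ n ih =>
      set ε : ℝ := (2 : ℝ) ^ (-((n : ℤ) + (k : ℤ) + 3)) with hε
      have hexp : ∀ ω, |N (n + 1) ω - M (n + 1) ω| ≤ ε := by
        intro ω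
        refine (hNclose (n + 1) ω).trans_eq ?_
        rw [hε]; congr 1; push_cast; ring
      have hDbdd : ∀ᵐ ω ∂μ, |(μ[N (n + 1) - M (n + 1)|ℱ n]) ω| ≤ ε := by
        set R : NNReal := (2 : NNReal) ^ (-((n : ℤ) + (k : ℤ) + 3)) with hR
        have hRc : (R : ℝ) = ε := by
          rw [hR, hε, NNReal.coe_zpow, NNReal.coe_ofNat]
        have hb : ∀ᵐ ω ∂μ, |(N (n + 1) - M (n + 1)) ω| ≤ (R : ℝ) := by
          refine ae_of_all _ fun ω => ?_
          rw [hRc]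
          simpa using hexp ω
        have := ae_bdd_condExp_of_ae_bdd (m := ℱ n) hb
        filter_upwards [this] with ω hω
        exact hω.trans_eq hRc
      have hsub : μ[N (n + 1) - M (n + 1)|ℱ n]
          =ᵐ[μ] μ[N (n + 1)|ℱ n] - μ[M (n + 1)|ℱ n] :=
        condExp_sub (hNint (n + 1)) (hMint (n + 1)) _
      have hMcond : μ[M (n + 1)|ℱ n] =ᵐ[μ] M n := hM.condExp_ae_eq n.le_succ
      filter_upwards [ih, hDbdd, hsub, hMcond] with ω hih hD hs hMc
      have hLeq : L (n + 1) ω - M (n + 1) ω =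
          (N (n + 1) ω - M (n + 1) ω) - (μ[N (n + 1) - M (n + 1)|ℱ n]) ω
            + (L n ω - M n ω) := by
        rw [hLsucc]
        simp only [Pi.add_apply, Pi.sub_apply] at hs ⊢
        rw [hs, hMc]
        ring
      rw [hLeq]
      calc |(N (n + 1) ω - M (n + 1) ω) - (μ[N (n + 1) - M (n + 1)|ℱ n]) ω
            + (L n ω - M n ω)|
          ≤ |N (n + 1) ω - M (n + 1) ω| + |(μ[N (n + 1) - M (n + 1)|ℱ n]) ω|
            + |L n ω - M n ω| :=
            (abs_add_le _ _).trans (add_le_add_left (abs_sub _ _) _)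
        _ ≤ ε + ε + (2 - (2 : ℝ) ^ (-(n : ℤ))) * (2 : ℝ) ^ (-(k + 1 : ℤ)) :=
            add_le_add (add_le_add (hexp ω) hD) hih
        _ = (2 - (2 : ℝ) ^ (-((n : ℕ) + 1 : ℤ))) * (2 : ℝ) ^ (-(k + 1 : ℤ)) := by
            rw [hε]
            have e1 : (2 : ℝ) ^ (-((n : ℤ) + (k : ℤ) + 3)) = ((2 : ℝ) ^ (n + k + 3 : ℕ))⁻¹ := by
              rw [show (-((n : ℤ) + (k : ℤ) + 3)) = -((n + k + 3 : ℕ) : ℤ) by push_cast; ring,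
                zpow_neg, zpow_natCast]
            have e2 : (2 : ℝ) ^ (-(n : ℤ)) = ((2 : ℝ) ^ (n : ℕ))⁻¹ := by
              rw [zpow_neg, zpow_natCast]
            have e3 : (2 : ℝ) ^ (-((k : ℤ) + 1)) = ((2 : ℝ) ^ (k + 1 : ℕ))⁻¹ := by
              rw [show (-((k : ℤ) + 1)) = -((k + 1 : ℕ) : ℤ) by push_cast; ring,
                zpow_neg, zpow_natCast]
            have e4 : (2 : ℝ) ^ (-((n : ℤ) + 1)) = ((2 : ℝ) ^ (n + 1 : ℕ))⁻¹ := by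
              rw [show (-((n : ℤ) + 1)) = -((n + 1 : ℕ) : ℤ) by push_cast; ring,
                zpow_neg, zpow_natCast]
            rw [e1, e2, e3, e4]
            have h2 : (2 : ℝ) ≠ 0 := two_ne_zero
            field_simp
            ring
  intro n
  filter_upwards [hbound n] with ω hω
  refine ⟨hω, hω.trans_lt ?_⟩
  have hpos : (0 : ℝ) < (2 : ℝ) ^ (-(n : ℤ)) := zpow_pos (by norm_num) _
  have h2k : (2 : ℝ) ^ (-(k : ℤ)) = 2 * (2 : ℝ) ^ (-((k : ℤ) + 1)) := by
    rw [show (-(k : ℤ)) = 1 + -((k : ℤ) + 1) by ring, zpow_add₀ two_ne_zero, zpow_one]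
  rw [h2k]
  have hkpos : (0 : ℝ) < (2 : ℝ) ^ (-((k : ℤ) + 1)) := zpow_pos (by norm_num) _
  nlinarith
end

section
/- Let (Ω, μ) be a probability space with a filtration (F_n)_{n∈ℕ}, and let (M_n) be a martingale with respect to (F_n) such that M_n(ω) > 0 for all n and ω. Then there exists a martingale (N_n) with respect to (F_n) such that N_0 = M_0, N_n(ω) > 0 for all n and ω, and for every ω with limsup_n M_n(ω) = ∞, one has liminf_n N_n(ω) = ∞. -/
open MeasureTheory Filter Topology

/-- Savings construction: state is (active fraction, savings). Whenever the active capital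
`c * M (n+1)` reaches `S + 1`, we move half of it to savings and halve the fraction. -/
noncomputable def sv {Ω : Type*} (M : ℕ → Ω → ℝ) : ℕ → Ω → ℝ × ℝ
  | 0 => fun _ => (1, 0)
  | n + 1 => fun ω =>
      if (sv M n ω).2 + 1 ≤ (sv M n ω).1 * M (n + 1) ω then
        ((sv M n ω).1 / 2, (sv M n ω).2 + (sv M n ω).1 * M (n + 1) ω / 2)
      else sv M n ω

lemma sv_succ {Ω : Type*} (M : ℕ → Ω → ℝ) (n : ℕ) (ω : Ω) :
    sv M (n + 1) ω =
      if (sv M n ω).2 + 1 ≤ (sv M n ω).1 * M (n + 1) ω then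
        ((sv M n ω).1 / 2, (sv M n ω).2 + (sv M n ω).1 * M (n + 1) ω / 2)
      else sv M n ω := rfl

theorem stmt_3 {Ω : Type*} {m0 : MeasurableSpace Ω} {μ : Measure Ω} [IsProbabilityMeasure μ]
    (ℱ : Filtration ℕ m0) (M : ℕ → Ω → ℝ) (hM : Martingale M ℱ μ)
    (hMint : ∀ n, Integrable (M n) μ)
    (hMpos : ∀ n ω, 0 < M n ω) :
    ∃ N : ℕ → Ω → ℝ, Martingale N ℱ μ ∧ (∀ n, Integrable (N n) μ) ∧ N 0 = M 0 ∧ (∀ n ω, 0 < N n ω) ∧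
      ∀ ω, limsup (fun n => (M n ω : EReal)) atTop = ⊤ →
        liminf (fun n => (N n ω : EReal)) atTop = ⊤ := by
  classical
  set c : ℕ → Ω → ℝ := fun n ω => (sv M n ω).1 with hc_def
  set S : ℕ → Ω → ℝ := fun n ω => (sv M n ω).2 with hS_def
  set N : ℕ → Ω → ℝ := fun n ω => S n ω + c n ω * M n ω with hN_def
  -- basic bounds on c
  have hc01 : ∀ n ω, 0 < c n ω ∧ c n ω ≤ 1 := by
    intro n ω
    induction n with
    | zero => simp [hc_def, sv]
    | succ n ih =>
      simp only [hc_def, sv_succ]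
      split
      · constructor
        · linarith [ih.1]
        · linarith [ih.2]
      · exact ih
  have hcpos : ∀ n ω, 0 < c n ω := fun n ω => (hc01 n ω).1
  have hcle : ∀ n ω, c n ω ≤ 1 := fun n ω => (hc01 n ω).2
  -- S is monotone in n
  have hSstep : ∀ n ω, S n ω ≤ S (n + 1) ω := by
    intro n ω
    simp only [hS_def, sv_succ]
    split
    · have := mul_pos (hcpos n ω) (hMpos (n + 1) ω)
      simp only [hc_def] at this
      dsimp only
      linarith
    · exact le_refl _
  have hSmono : ∀ ω, Monotone fun n => S n ω := fun ω =>
    monotone_nat_of_le_succ fun n => hSstep n ω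
  have hSnonneg : ∀ n ω, 0 ≤ S n ω := by
    intro n ω
    have h0 : S 0 ω = 0 := by simp [hS_def, sv]
    calc 0 = S 0 ω := h0.symm
    _ ≤ S n ω := hSmono ω (Nat.zero_le n)
  -- key identity
  have hkey : ∀ n ω, N (n + 1) ω = S n ω + c n ω * M (n + 1) ω := by
    intro n ω
    simp only [hN_def, hS_def, hc_def, sv_succ]
    split
    · dsimp only; ring
    · rfl
  -- measurability
  have hmeas : ∀ n, Measurable[ℱ n] (c n) ∧ Measurable[ℱ n] (S n) := by
    intro n
    induction n with
    | zero =>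
      constructor <;> · simp only [hc_def, hS_def, sv]; exact measurable_const
    | succ n ih =>
      have hcm : Measurable[ℱ (n + 1)] (c n) := ih.1.mono (ℱ.mono n.le_succ) le_rfl
      have hSm : Measurable[ℱ (n + 1)] (S n) := ih.2.mono (ℱ.mono n.le_succ) le_rfl
      have hMm : Measurable[ℱ (n + 1)] (M (n + 1)) := (hM.stronglyAdapted (n + 1)).measurable
      have hset : MeasurableSet[ℱ (n + 1)] {ω | S n ω + 1 ≤ c n ω * M (n + 1) ω} :=
        measurableSet_le (hSm.add measurable_const) (hcm.mul hMm)
      constructor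
      · have : c (n + 1) = fun ω =>
            if S n ω + 1 ≤ c n ω * M (n + 1) ω then c n ω / 2 else c n ω := by
          funext ω
          simp only [hc_def, hS_def, sv_succ, apply_ite Prod.fst]
        rw [this]
        exact Measurable.ite hset (hcm.div_const 2) hcm
      · have : S (n + 1) = fun ω =>
            if S n ω + 1 ≤ c n ω * M (n + 1) ω then S n ω + c n ω * M (n + 1) ω / 2
            else S n ω := by
          funext ω
          simp only [hc_def, hS_def, sv_succ, apply_ite Prod.snd]
        rw [this]
        exact Measurable.ite hset (hSm.add ((hcm.mul hMm).div_const 2)) hSm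
  -- integrability of c n * M m
  have hcMint : ∀ n m, Integrable (fun ω => c n ω * M m ω) μ := by
    intro n m
    refine (hMint m).mono ?_ ?_
    · exact (((hmeas n).1.mono (ℱ.le n) le_rfl).mul
        ((hM.stronglyAdapted m).measurable.mono (ℱ.le m) le_rfl)).aestronglyMeasurable
    · refine Eventually.of_forall fun ω => ?_
      simp only [Real.norm_eq_abs, abs_mul]
      calc |c n ω| * |M m ω| ≤ 1 * |M m ω| := by
            apply mul_le_mul_of_nonneg_right _ (abs_nonneg _)
            rw [abs_of_pos (hcpos n ω)]; exact hcle n ω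
      _ = |M m ω| := one_mul _
  have hSint : ∀ n, Integrable (S n) μ := by
    intro n
    induction n with
    | zero =>
      have : S 0 = fun _ => (0 : ℝ) := by funext ω; simp [hS_def, sv]
      rw [this]; exact integrable_const 0
    | succ n ih =>
      have hrw : S (n + 1) = fun ω =>
          if S n ω + 1 ≤ c n ω * M (n + 1) ω then S n ω + c n ω * M (n + 1) ω / 2
          else S n ω := by
        funext ω
        simp only [hc_def, hS_def, sv_succ, apply_ite Prod.snd]
      rw [hrw]
      have hset : MeasurableSet {ω | S n ω + 1 ≤ c n ω * M (n + 1) ω} := by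
        refine measurableSet_le ?_ ?_
        · exact ((hmeas n).2.mono (ℱ.le n) le_rfl).add measurable_const
        · exact ((hmeas n).1.mono (ℱ.le n) le_rfl).mul
            ((hM.stronglyAdapted (n + 1)).measurable.mono (ℱ.le (n + 1)) le_rfl)
      have h1 : Integrable (fun ω => S n ω + c n ω * M (n + 1) ω / 2) μ :=
        ih.add (((hcMint n (n + 1)).div_const 2))
      have heq : (fun ω =>
          if S n ω + 1 ≤ c n ω * M (n + 1) ω then S n ω + c n ω * M (n + 1) ω / 2
          else S n ω) =
          Set.piecewise {ω | S n ω + 1 ≤ c n ω * M (n + 1) ω}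
            (fun ω => S n ω + c n ω * M (n + 1) ω / 2) (S n) := by
        funext ω
        by_cases h : S n ω + 1 ≤ c n ω * M (n + 1) ω <;>
          simp [Set.piecewise, h]
      rw [heq]
      exact Integrable.piecewise hset h1.integrableOn ih.integrableOn
  have hNint : ∀ n, Integrable (N n) μ := fun n => (hSint n).add (hcMint n n)
  -- adapted
  have hNadapted : StronglyAdapted ℱ N := by
    intro n
    exact (((hmeas n).2.add ((hmeas n).1.mul (hM.stronglyAdapted n).measurable))).stronglyMeasurable
  -- martingale
  have hNmart : Martingale N ℱ μ := by
    refine martingale_nat hNadapted hNint fun n => ?_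
    have hrw : N (n + 1) = (fun ω => S n ω) + (fun ω => c n ω) * M (n + 1) := by
      funext ω
      simp only [Pi.add_apply, Pi.mul_apply]
      exact hkey n ω
    rw [hrw]
    have hadd := condExp_add (μ := μ) (m := ℱ n) (hSint n)
      (show Integrable ((fun ω => c n ω) * M (n + 1)) μ from hcMint n (n + 1))
    have hSc : μ[S n | ℱ n] = S n :=
      condExp_of_stronglyMeasurable (ℱ.le n) (hmeas n).2.stronglyMeasurable (hSint n)
    have hmul := condExp_mul_of_stronglyMeasurable_left (μ := μ)
      (show StronglyMeasurable[ℱ n] fun ω => c n ω from (hmeas n).1.stronglyMeasurable)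
      (show Integrable ((fun ω => c n ω) * M (n + 1)) μ from hcMint n (n + 1))
      (hMint (n + 1))
    have hMc : μ[M (n + 1) | ℱ n] =ᵐ[μ] M n := hM.2 n (n + 1) n.le_succ
    filter_upwards [hadd, hmul, hMc] with ω h1 h2 h3
    simp only [Pi.add_apply, Pi.mul_apply] at h1 h2 h3 ⊢
    rw [hN_def]
    simp only [h1, h2, hSc, h3]
  -- N 0 = M 0
  have hN0 : N 0 = M 0 := by
    funext ω
    simp [hN_def, hS_def, hc_def, sv]
  -- positivity
  have hNpos : ∀ n ω, 0 < N n ω := by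
    intro n ω
    have := mul_pos (hcpos n ω) (hMpos n ω)
    have := hSnonneg n ω
    simp only [hN_def]
    linarith
  refine ⟨N, hNmart, hNint, hN0, hNpos, ?_⟩
  intro ω hlim
  -- frequently unbounded
  have hfreq : ∀ C : ℝ, ∀ k : ℕ, ∃ n ≥ k, C < M n ω := by
    intro C k
    have h1 : (C : EReal) < limsup (fun n => (M n ω : EReal)) atTop := by
      rw [hlim]; exact EReal.coe_lt_top C
    have h2 : ∃ᶠ n in atTop, (C : EReal) < (M n ω : EReal) :=
      frequently_lt_of_lt_limsup (by isBoundedDefault) h1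
    obtain ⟨n, hn, hn2⟩ := (frequently_atTop.mp h2) k
    exact ⟨n, hn, by exact_mod_cast hn2⟩
  -- infinitely many halving times
  have hinf : ∀ k : ℕ, ∃ n ≥ k, S n ω + 1 ≤ c n ω * M (n + 1) ω := by
    intro k
    by_contra h
    push_neg at h
    -- no halving from time k on: sv stays constant
    have hconst : ∀ n ≥ k, sv M n ω = sv M k ω := by
      intro n hn
      induction n with
      | zero => simp_all
      | succ n ih =>
        rcases Nat.lt_or_ge k (n + 1) with h1 | h1
        · have hkn : k ≤ n := Nat.lt_succ_iff.mp h1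
          have hne := h n hkn
          rw [sv_succ]
          have : ¬ ((sv M n ω).2 + 1 ≤ (sv M n ω).1 * M (n + 1) ω) := by
            simpa [hS_def, hc_def] using hne
          rw [if_neg this]
          exact ih hkn
        · obtain rfl : k = n + 1 := by omega
          rfl
    obtain ⟨n, hn, hCn⟩ := hfreq ((S k ω + 1) / c k ω) (k + 1)
    obtain ⟨m, rfl⟩ : ∃ m, n = m + 1 := ⟨n - 1, by omega⟩
    have hmk : m ≥ k := by omega
    have hsv : sv M m ω = sv M k ω := hconst m hmk
    have hne := h m hmk
    have hcm : c m ω = c k ω := by simp [hc_def, hsv]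
    have hSm : S m ω = S k ω := by simp [hS_def, hsv]
    rw [hcm, hSm] at hne
    have : M (m + 1) ω < (S k ω + 1) / c k ω := by
      rw [lt_div_iff₀ (hcpos k ω)]
      nlinarith [hcpos k ω]
    linarith
  -- savings grow without bound
  have hSgrow : ∀ j : ℕ, ∃ n, (3 / 2 : ℝ) ^ j ≤ S n ω + 1 := by
    intro j
    induction j with
    | zero =>
      refine ⟨0, ?_⟩
      simp only [pow_zero]
      linarith [hSnonneg 0 ω]
    | succ j ih =>
      obtain ⟨n, hn⟩ := ih
      obtain ⟨m, hmn, hh⟩ := hinf n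
      refine ⟨m + 1, ?_⟩
      have hS1 : S (m + 1) ω = S m ω + c m ω * M (m + 1) ω / 2 := by
        simp only [hS_def, sv_succ]
        rw [if_pos (by simpa [hS_def, hc_def] using hh)]
      have hSnm : S n ω ≤ S m ω := hSmono ω hmn
      have : (3 / 2 : ℝ) ^ (j + 1) = (3 / 2) * (3 / 2) ^ j := by ring
      rw [this, hS1]
      nlinarith [hn, hSnm, hh]
  have hStend : Tendsto (fun n => S n ω) atTop atTop := by
    refine tendsto_atTop_atTop_of_monotone (hSmono ω) fun b => ?_
    have hpow : Tendsto (fun j : ℕ => (3 / 2 : ℝ) ^ j) atTop atTop :=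
      tendsto_pow_atTop_atTop_of_one_lt (by norm_num)
    obtain ⟨j, hj⟩ := (hpow.eventually_ge_atTop (b + 1)).exists
    obtain ⟨n, hn⟩ := hSgrow j
    exact ⟨n, by linarith⟩
  have hNtend : Tendsto (fun n => N n ω) atTop atTop := by
    refine tendsto_atTop_mono (fun n => ?_) hStend
    have := mul_pos (hcpos n ω) (hMpos n ω)
    simp only [hN_def]
    linarith
  have hNtop : Tendsto (fun n => (N n ω : EReal)) atTop (𝓝 ⊤) := by
    rw [EReal.tendsto_nhds_top_iff_real]
    intro x
    filter_upwards [hNtend.eventually_gt_atTop x] with n hn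
    exact_mod_cast hn
  exact hNtop.liminf_eq
end

section
/- Let (Ω, μ) be a probability space with a filtration (F_p) indexed by ℕ × ℕ with the lexicographic order. Suppose (M_m)_{m∈ℕ} is a martingale with respect to the filtration (F_{(m,0)})_{m∈ℕ}. Define N_{(m,n)} = μ[M_{m+1} | F_{(m,n)}]. Then (N_p)_{p∈ℕ×ℕ} is a martingale with respect to (F_p), and N_{(m,0)} = M_m almost everywhere for each m. -/
open MeasureTheory

theorem stmt_5 {Ω : Type*} {m0 : MeasurableSpace Ω} {μ : Measure Ω} [IsProbabilityMeasure μ]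
    (ℱ : Filtration (ℕ ×ₗ ℕ) m0)
    (M : ℕ → Ω → ℝ)
    (hMint : ∀ m, Integrable (M m) μ)
    (hMmeas : ∀ m, StronglyMeasurable[ℱ (toLex (m, 0))] (M m))
    (hMmart : ∀ m m', m ≤ m' → μ[M m'|ℱ (toLex (m, 0))] =ᵐ[μ] M m)
    (N : ℕ ×ₗ ℕ → Ω → ℝ)
    (hN : ∀ p : ℕ ×ₗ ℕ, N p = μ[M ((ofLex p).1 + 1)|ℱ p]) :
    Martingale N ℱ μ ∧ (∀ p : ℕ ×ₗ ℕ, Integrable (N p) μ) ∧ ∀ m, N (toLex (m, 0)) =ᵐ[μ] M m := by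
  have hMm : ∀ m, N (toLex (m, 0)) =ᵐ[μ] M m := by
    intro m
    rw [hN]
    exact hMmart m (m + 1) (Nat.le_succ m)
  refine ⟨⟨fun p => ?_, fun i j hij => ?_⟩, fun p => ?_, hMm⟩
  · rw [hN]; exact stronglyMeasurable_condExp
  · rw [hN i, hN j]
    have hfst : (ofLex i).1 ≤ (ofLex j).1 := by
      rcases Prod.Lex.le_iff.mp hij with h | ⟨h, _⟩
      · exact h.le
      · exact h.le
    have hi' : i ≤ toLex ((ofLex i).1 + 1, 0) :=
      Prod.Lex.le_iff.mpr (Or.inl (Nat.lt_succ_self _))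
    calc μ[μ[M ((ofLex j).1 + 1)|ℱ j]|ℱ i]
        =ᵐ[μ] μ[M ((ofLex j).1 + 1)|ℱ i] :=
          condExp_condExp_of_le (ℱ.mono hij) (ℱ.le j)
      _ =ᵐ[μ] μ[μ[M ((ofLex j).1 + 1)|ℱ (toLex ((ofLex i).1 + 1, 0))]|ℱ i] :=
          (condExp_condExp_of_le (ℱ.mono hi') (ℱ.le _)).symm
      _ =ᵐ[μ] μ[M ((ofLex i).1 + 1)|ℱ i] :=
          condExp_congr_ae (hMmart _ _ (by omega))
  · rw [hN]; exact integrable_condExp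
end

section
/- Let (Ω₁, μ₁) be a probability space and let Ω₂ = ℕ → Bool carry the fair-coin product measure μ₂. For n ∈ ℕ let F_n be the sub-σ-algebra of Ω₂ generated by the coordinate maps β ↦ β(i) for i < n, and let G_n be the sub-σ-algebra of Ω₁ × Ω₂ generated by the first projection together with the maps (α,β) ↦ β(i) for i < n. Suppose (M_n) is a sequence of (μ₁ ⊗ μ₂)-integrable functions M_n : Ω₁ × Ω₂ → ℝ, each strongly G_n-measurable, such that for μ₁-almost every α ∈ Ω₁ and every n, μ₂[M_{n+1}(α, ·) | F_n] = M_n(α, ·) μ₂-almost everywhere. Then (M_n) is a martingale on (Ω₁ × Ω₂, μ₁ ⊗ μ₂) with respect to the filtration (G_n). -/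
open MeasureTheory

theorem stmt_12 {Ω₁ : Type*} [MeasurableSpace Ω₁]
    (μ₁ : Measure Ω₁) [IsProbabilityMeasure μ₁]
    (μ₂ : Measure (ℕ → Bool)) [IsProbabilityMeasure μ₂]
    (hμ₂ : ∀ (s : Finset ℕ) (v : ℕ → Bool),
      μ₂ {β | ∀ i ∈ s, β i = v i} = (1 / 2 : ENNReal) ^ s.card)
    (F : ℕ → MeasurableSpace (ℕ → Bool))
    (hF : ∀ n, F n = ⨆ i < n, MeasurableSpace.comap (fun β : ℕ → Bool => β i) ⊤)
    (G : ℕ → MeasurableSpace (Ω₁ × (ℕ → Bool)))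
    (hG : ∀ n, G n = MeasurableSpace.comap (Prod.fst : Ω₁ × (ℕ → Bool) → Ω₁) inferInstance ⊔
      ⨆ i < n, MeasurableSpace.comap (fun p : Ω₁ × (ℕ → Bool) => p.2 i) ⊤)
    (M : ℕ → Ω₁ × (ℕ → Bool) → ℝ)
    (hMint : ∀ n, Integrable (M n) (μ₁.prod μ₂))
    (hMmeas : ∀ n, StronglyMeasurable[G n] (M n))
    (hMmart : ∀ᵐ α ∂μ₁, ∀ n,
      condExp (F n) μ₂ (fun β => M (n + 1) (α, β)) =ᵐ[μ₂] fun β => M n (α, β)) :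
    ∀ m n, m ≤ n → condExp (G m) (μ₁.prod μ₂) (M n) =ᵐ[μ₁.prod μ₂] M m := by
  have hFle : ∀ n, F n ≤ (inferInstance : MeasurableSpace (ℕ → Bool)) := fun n => by
    rw [hF n]
    exact iSup₂_le fun i _ => (measurable_pi_apply i).comap_le
  have hGeq : ∀ n, G n = @Prod.instMeasurableSpace _ _ inferInstance (F n) := fun n => by
    rw [hG n, hF n]
    show _ = MeasurableSpace.comap Prod.fst _ ⊔
      MeasurableSpace.comap Prod.snd (⨆ i < n, MeasurableSpace.comap (fun β : ℕ → Bool => β i) ⊤)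
    simp_rw [MeasurableSpace.comap_iSup, MeasurableSpace.comap_comp]
    rfl
  have hGle : ∀ n, G n ≤ (inferInstance : MeasurableSpace (Ω₁ × (ℕ → Bool))) := fun n => by
    rw [hGeq n]
    exact sup_le measurable_fst.comap_le
      ((MeasurableSpace.comap_mono (hFle n)).trans measurable_snd.comap_le)
  have hGmono : ∀ {m n : ℕ}, m ≤ n → G m ≤ G n := by
    intro m n hmn
    rw [hG m, hG n]
    exact sup_le_sup_left (iSup₂_le fun i hi => le_iSup₂ (f := fun i _ =>
      MeasurableSpace.comap (fun p : Ω₁ × (ℕ → Bool) => p.2 i) ⊤) i (hi.trans_le hmn)) _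
  -- the one-step martingale property on the product space
  have key : ∀ n, condExp (G n) (μ₁.prod μ₂) (M (n + 1)) =ᵐ[μ₁.prod μ₂] M n := by
    intro n
    -- rectangles
    have hrect : ∀ (A : Set Ω₁) (B : Set (ℕ → Bool)), MeasurableSet A → MeasurableSet[F n] B →
        ∫ x in A ×ˢ B, M (n + 1) x ∂(μ₁.prod μ₂) = ∫ x in A ×ˢ B, M n x ∂(μ₁.prod μ₂) := by
      intro A B hA hB
      have hB' : MeasurableSet B := hFle n B hB
      rw [setIntegral_prod _ ((hMint (n + 1)).integrableOn),
        setIntegral_prod _ ((hMint n).integrableOn)]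
      refine setIntegral_congr_ae hA ?_
      filter_upwards [hMmart, (hMint (n + 1)).prod_right_ae, (hMint n).prod_right_ae]
        with α hmart hint1 _ _
      calc ∫ y in B, M (n + 1) (α, y) ∂μ₂
          = ∫ y in B, (condExp (F n) μ₂ fun β => M (n + 1) (α, β)) y ∂μ₂ :=
            (setIntegral_condExp (hFle n) hint1 hB).symm
        _ = ∫ y in B, M n (α, y) ∂μ₂ := setIntegral_congr_ae hB' ((hmart n).mono fun y hy _ => hy)
    have htot : ∫ x, M (n + 1) x ∂(μ₁.prod μ₂) = ∫ x, M n x ∂(μ₁.prod μ₂) := by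
      have := hrect Set.univ Set.univ MeasurableSet.univ (@MeasurableSet.univ _ (F n))
      simpa [Set.univ_prod_univ] using this
    have hset : ∀ s : Set (Ω₁ × (ℕ → Bool)), MeasurableSet[G n] s →
        ∫ x in s, M (n + 1) x ∂(μ₁.prod μ₂) = ∫ x in s, M n x ∂(μ₁.prod μ₂) := by
      have hgen : G n = MeasurableSpace.generateFrom (Set.image2 (· ×ˢ ·)
          {s : Set Ω₁ | MeasurableSet s} {t : Set (ℕ → Bool) | MeasurableSet[F n] t}) := by
        rw [hGeq n]
        exact (@generateFrom_prod _ _ inferInstance (F n)).symm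
      intro s hs
      refine MeasurableSpace.induction_on_inter
        (C := fun s _ => ∫ x in s, M (n + 1) x ∂(μ₁.prod μ₂) = ∫ x in s, M n x ∂(μ₁.prod μ₂))
        (m := G n) hgen (@isPiSystem_prod _ _ inferInstance (F n)) (by simp) ?_ ?_ ?_ s hs
      · rintro t ⟨A, hA, B, hB, rfl⟩
        exact hrect A B hA hB
      · intro t ht hC
        have ht' : MeasurableSet t := hGle n t ht
        have h1 := integral_add_compl ht' (hMint (n + 1))
        have h2 := integral_add_compl ht' (hMint n)
        rw [← htot, ← h1, hC] at h2
        linarith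
      · intro f hdisj hmeas hC
        rw [integral_iUnion (fun i => hGle n _ (hmeas i)) hdisj (hMint (n + 1)).integrableOn,
          integral_iUnion (fun i => hGle n _ (hmeas i)) hdisj (hMint n).integrableOn]
        exact tsum_congr hC
    refine (ae_eq_condExp_of_forall_setIntegral_eq (hGle n) (hMint (n + 1))
      (fun s _ _ => (hMint n).integrableOn) (fun s hs _ => (hset s hs).symm)
      ((hMmeas n).aestronglyMeasurable)).symm
  intro m n hmn
  induction n, hmn using Nat.le_induction with
  | base =>
    rw [condExp_of_stronglyMeasurable (hGle m) (hMmeas m) (hMint m)]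
  | succ n hmn ih =>
    calc condExp (G m) (μ₁.prod μ₂) (M (n + 1))
        =ᵐ[μ₁.prod μ₂] condExp (G m) (μ₁.prod μ₂) (condExp (G n) (μ₁.prod μ₂) (M (n + 1))) :=
          (condExp_condExp_of_le (hGmono hmn) (hGle n)).symm
      _ =ᵐ[μ₁.prod μ₂] condExp (G m) (μ₁.prod μ₂) (M n) := condExp_congr_ae (key n)
      _ =ᵐ[μ₁.prod μ₂] M m := ih
end
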